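/- For m > 1, the m-Dyck shift has no synchronizing words: for every admissible word w there exist admissible words u = α_i l w and v = w r β_j (with appropriate l, r and i ≠ j) such that the concatenation α_i l w r β_j is not admissible. -/

import Mathlib

/-- Symbols of the `m`-Dyck alphabet: `a j` is the opening bracket `α_j`,
`b j` is the closing bracket `β_j`. -/
inductive DSym (m : ℕ) : Type
  | a : Fin m → DSym m
  | b : Fin m → DSym m
  deriving DecidableEq

namespace Dyck

/-- One step of the stack evaluation computing the reduced form (canonical
representative in the syntactic monoid).  `none` is the zero of the monoid;
`some (bs, as)` is the reduced word `β_{bs} α_{as}` (unmatched closing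
brackets, then a stack of unmatched opening brackets). -/
def step {m : ℕ} : Option (List (Fin m) × List (Fin m)) → DSym m →
    Option (List (Fin m) × List (Fin m))
  | none, _ => none
  | some (bs, as), .a j => some (bs, j :: as)
  | some (bs, []), .b j => some (bs ++ [j], [])
  | some (bs, i :: as), .b j => if i = j then some (bs, as) else none

/-- The image of a word in the syntactic monoid `M` (in reduced form). -/
def eval {m : ℕ} (w : List (DSym m)) : Option (List (Fin m) × List (Fin m)) :=
  w.foldl step (some ([], []))

/-- A word is admissible (belongs to the Dyck language) iff it is nonzero mod `M`. -/
def Admissible {m : ℕ} (w : List (DSym m)) : Prop := eval w ≠ none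

/-- A word is balanced iff it is `≡ 1` mod `M`. -/
def Balanced {m : ℕ} (w : List (DSym m)) : Prop := eval w = some ([], [])

end Dyck

namespace Dyck

lemma foldl_none {m : ℕ} (w : List (DSym m)) : w.foldl step none = none := by
  induction w with
  | nil => rfl
  | cons x w ih => simpa [step] using ih

lemma bs_prefix {m : ℕ} : ∀ (w : List (DSym m)) (p s bs₂ as₂ : List (Fin m)),
    w.foldl step (some (p, s)) = some (bs₂, as₂) → p <+: bs₂ := by
  intro w
  induction w with
  | nil =>
    intro p s bs₂ as₂ h
    simp only [List.foldl_nil, Option.some.injEq, Prod.mk.injEq] at h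
    exact h.1 ▸ List.prefix_rfl
  | cons x w ih =>
    intro p s bs₂ as₂ h
    cases x with
    | a j =>
      exact ih p (j :: s) bs₂ as₂ (by simpa [step] using h)
    | b j =>
      cases s with
      | nil =>
        have := ih (p ++ [j]) [] bs₂ as₂ (by simpa [step] using h)
        exact (List.prefix_append p [j]).trans this
      | cons i s =>
        by_cases hij : i = j
        · exact ih p s bs₂ as₂ (by simpa [step, hij] using h)
        · simp only [List.foldl_cons, step, if_neg hij, foldl_none] at h
          exact nomatch h

lemma key {m : ℕ} : ∀ (w : List (DSym m)) (p s q as₂ c t : List (Fin m)),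
    w.foldl step (some (p, s)) = some (p ++ q, as₂) →
    w.foldl step (some (c, s ++ (q ++ t))) = some (c, as₂ ++ t) := by
  intro w
  induction w with
  | nil =>
    intro p s q as₂ c t h
    simp only [List.foldl_nil, Option.some.injEq, Prod.mk.injEq] at h ⊢
    have hq : q = [] := by
      have := h.1
      simpa using (List.append_right_injective p (by simpa using this.symm))
    subst hq
    simp [h.2]
  | cons x w ih =>
    intro p s q as₂ c t h
    cases x with
    | a j =>
      simp only [List.foldl_cons, step] at h ⊢
      exact ih p (j :: s) q as₂ c t h
    | b j =>
      cases s with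
      | nil =>
        simp only [List.foldl_cons, step, List.nil_append] at h ⊢
        have hpre : p ++ [j] <+: p ++ q := bs_prefix w (p ++ [j]) [] _ _ h
        obtain ⟨q', hq'⟩ := hpre
        have hq : q = j :: q' := by
          have : p ++ [j] ++ q' = p ++ q := hq'
          rw [List.append_assoc] at this
          exact (List.append_cancel_left this).symm
        subst hq
        -- second run: stack is j :: (q' ++ t)
        simp only [List.cons_append, step, if_pos rfl]
        have h' : w.foldl step (some (p ++ [j], [])) = some ((p ++ [j]) ++ q', as₂) := by
          rw [List.append_assoc]; exact h
        simpa using ih (p ++ [j]) [] q' as₂ c t h'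
      | cons i s =>
        by_cases hij : i = j
        · subst hij
          simp only [List.foldl_cons, List.cons_append, step, if_pos rfl] at h ⊢
          exact ih p s q as₂ c t h
        · simp only [List.foldl_cons, step, if_neg hij, foldl_none] at h
          exact nomatch h

lemma push {m : ℕ} : ∀ (xs : List (Fin m)) (c s : List (Fin m)),
    (xs.map DSym.a).foldl step (some (c, s)) = some (c, xs.reverse ++ s) := by
  intro xs
  induction xs with
  | nil => intro c s; simp
  | cons x xs ih =>
    intro c s
    simp only [List.map_cons, List.foldl_cons, step, List.reverse_cons, List.append_assoc]
    simpa using ih c (x :: s)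

lemma pop {m : ℕ} : ∀ (xs : List (Fin m)) (c t : List (Fin m)),
    (xs.map DSym.b).foldl step (some (c, xs ++ t)) = some (c, t) := by
  intro xs
  induction xs with
  | nil => intro c t; simp
  | cons x xs ih =>
    intro c t
    simp only [List.map_cons, List.foldl_cons, List.cons_append, step, if_pos rfl]
    exact ih c t


end Dyck

/-- for `m > 1` the `m`-Dyck shift has no synchronizing words:
for every admissible `w` there are `i ≠ j` and words `l, r` with
`α_i l w` and `w r β_j` admissible but `α_i l w r β_j` not admissible. -/
theorem stmt10 (m : ℕ) (hm : 1 < m) (w : List (DSym m))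
    (hadm : Dyck.Admissible w) :
    ∃ (i j : Fin m) (l r : List (DSym m)), i ≠ j ∧
      Dyck.Admissible (DSym.a i :: (l ++ w)) ∧
      Dyck.Admissible (w ++ r ++ [DSym.b j]) ∧
      ¬ Dyck.Admissible (DSym.a i :: (l ++ w ++ r ++ [DSym.b j])) := by
  cases h : Dyck.eval w with
  | none => exact absurd h hadm
  | some p =>
    obtain ⟨bs, as⟩ := p
    have h0 : (0 : ℕ) < m := by omega
    set i : Fin m := ⟨0, h0⟩ with hi
    set j : Fin m := ⟨1, hm⟩ with hj
    set l : List (DSym m) := bs.reverse.map DSym.a with hl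
    set r : List (DSym m) := as.map DSym.b with hr
    have hfw : w.foldl Dyck.step (some ([], [])) = some (bs, as) := h
    have e1 : ∀ t : List (Fin m),
        w.foldl Dyck.step (some ([], bs ++ t)) = some ([], as ++ t) := by
      intro t
      have := Dyck.key w [] [] bs as [] t (by simpa using hfw)
      simpa using this
    have hLW : (l ++ w).foldl Dyck.step (some ([], [i])) = some ([], as ++ [i]) := by
      rw [List.foldl_append, hl, Dyck.push]
      simpa using e1 [i]
    have hL : Dyck.eval (DSym.a i :: (l ++ w)) = some ([], as ++ [i]) := by
      show ((DSym.a i :: (l ++ w)).foldl Dyck.step (some ([], []))) = _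
      rw [List.foldl_cons]
      exact hLW
    have hRpop : ∀ t : List (Fin m),
        r.foldl Dyck.step (some (([] : List (Fin m)), as ++ t)) = some ([], t) :=
      fun t => Dyck.pop as [] t
    refine ⟨i, j, l, r, ?_, ?_, ?_, ?_⟩
    · simp [hi, hj, Fin.ext_iff]
    · rw [Dyck.Admissible, hL]; simp
    · rw [Dyck.Admissible]
      have : Dyck.eval (w ++ r ++ [DSym.b j]) = some (bs ++ [j], []) := by
        show ((w ++ r ++ [DSym.b j]).foldl Dyck.step (some ([], []))) = _
        rw [List.foldl_append, List.foldl_append, hfw]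
        have hpop : r.foldl Dyck.step (some (bs, as)) = some (bs, []) := by
          have := Dyck.pop as bs []
          simpa using this
        rw [hpop]
        rfl
      rw [this]; simp
    · rw [Dyck.Admissible]
      intro hne
      apply hne
      show ((DSym.a i :: (l ++ w ++ r ++ [DSym.b j])).foldl Dyck.step (some ([], []))) = none
      rw [List.foldl_cons]
      have hstep : Dyck.step (some (([] : List (Fin m)), ([] : List (Fin m)))) (DSym.a i)
          = some ([], [i]) := rfl
      rw [hstep, List.foldl_append, List.foldl_append, hLW, hRpop [i]]
      have hij : i ≠ j := by simp [hi, hj, Fin.ext_iff]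
      simp [List.foldl_cons, Dyck.step, hij]
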